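/- Let q(z) = q̂(1)z + ⋯ + q̂(n)zⁿ be a complex polynomial with q(0) = 0, and define its norm n(q) = max over 1 ≤ k ≤ n of |q̂(k)|/C(n,k). Then the image q(Δ) of the open unit disk contains the open disk of radius n(q) centered at the origin. -/

import Mathlib

open Polynomial Multiset

lemma powersetCard_card_self {α : Type*} (s : Multiset α) :
    s.powersetCard (Multiset.card s) = {s} := by
  have h1 : Multiset.card (s.powersetCard (Multiset.card s)) = 1 := by
    rw [Multiset.card_powersetCard, Nat.choose_self]
  obtain ⟨a, ha⟩ := Multiset.card_eq_one.mp h1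
  have hs : s ∈ s.powersetCard (Multiset.card s) :=
    Multiset.mem_powersetCard.mpr ⟨le_rfl, rfl⟩
  rw [ha] at hs ⊢
  rw [Multiset.mem_singleton.mp hs]

lemma esymm_card_self (s : Multiset ℂ) : s.esymm (Multiset.card s) = s.prod := by
  rw [Multiset.esymm, powersetCard_card_self]
  simp

lemma norm_mprod (s : Multiset ℂ) : ‖s.prod‖ = (s.map (fun x => ‖x‖)).prod := by
  simpa using map_multiset_prod (normHom : ℂ →*₀ ℝ) s

lemma prod_abs_le (s A : Multiset ℂ) (hs : ∀ r ∈ s, 1 ≤ ‖r‖) (hA : A ≤ s) :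
    ‖A.prod‖ ≤ (s.map (fun x => ‖x‖)).prod := by
  obtain ⟨B, rfl⟩ := Multiset.le_iff_exists_add.mp hA
  rw [norm_mprod, Multiset.map_add, Multiset.prod_add]
  have h1 : (1 : ℝ) ≤ (B.map (fun x => ‖x‖)).prod := by
    apply Multiset.one_le_prod
    intro x hx
    obtain ⟨r, hr, rfl⟩ := Multiset.mem_map.mp hx
    exact hs r (Multiset.mem_add.mpr (Or.inr hr))
  have h0 : (0 : ℝ) ≤ (A.map (fun x => ‖x‖)).prod := by
    apply Multiset.prod_nonneg
    intro x hx
    obtain ⟨r, hr, rfl⟩ := Multiset.mem_map.mp hx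
    exact (norm_nonneg r)
  exact le_mul_of_one_le_right h0 h1

lemma esymm_abs_le (s : Multiset ℂ) (hs : ∀ r ∈ s, 1 ≤ ‖r‖) (j : ℕ) :
    ‖s.esymm j‖ ≤ ((Multiset.card s).choose j : ℝ) * (s.map (fun x => ‖x‖)).prod := by
  rw [Multiset.esymm]
  calc ‖((s.powersetCard j).map Multiset.prod).sum‖
      ≤ (((s.powersetCard j).map Multiset.prod).map (fun x => ‖x‖)).sum := by
        simpa using
          norm_multiset_sum_le ((s.powersetCard j).map Multiset.prod)
    _ ≤ _ := by
        rw [Multiset.map_map]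
        have := Multiset.sum_le_card_nsmul ((s.powersetCard j).map ((fun x => ‖x‖) ∘ Multiset.prod))
          ((s.map (fun x => ‖x‖)).prod) ?_
        · simpa [Multiset.card_powersetCard, nsmul_eq_mul] using this
        · intro x hx
          obtain ⟨A, hA, rfl⟩ := Multiset.mem_map.mp hx
          exact prod_abs_le s A hs (Multiset.mem_powersetCard.mp hA).1

theorem range_contains_disk_of_norm
    (n : ℕ) (hn : 1 ≤ n) (qh : ℕ → ℂ)
    (q : ℂ → ℂ) (hq : ∀ z, q z = ∑ k ∈ Finset.Icc 1 n, qh k * z ^ k) :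
    ∀ w : ℂ,
      ‖w‖ <
        (Finset.Icc 1 n).sup' (Finset.nonempty_Icc.mpr hn)
          (fun k => ‖qh k‖ / (n.choose k)) →
      ∃ z : ℂ, ‖z‖ < 1 ∧ q z = w := by
  intro w hw
  by_contra hcon
  push_neg at hcon
  -- q 0 = 0
  have hq0 : q 0 = 0 := by
    rw [hq]
    apply Finset.sum_eq_zero
    intro k hk
    have : 1 ≤ k := (Finset.mem_Icc.mp hk).1
    simp [zero_pow (by omega : k ≠ 0)]
  have hw0 : w ≠ 0 := by
    intro h
    exact hcon 0 (by simp) (by rw [hq0, h])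
  -- the polynomial
  set p : ℂ[X] := (∑ k ∈ Finset.Icc 1 n, C (qh k) * X ^ k) - C w with hp
  have heval : ∀ z, p.eval z = q z - w := by
    intro z
    simp [hp, hq, eval_finset_sum]
  have hcoeff0 : p.coeff 0 = -w := by
    have : p.eval 0 = q 0 - w := heval 0
    rw [hq0, zero_sub] at this
    rwa [← coeff_zero_eq_eval_zero] at this
  have hcoeffk : ∀ k, 1 ≤ k → k ≤ n → p.coeff k = qh k := by
    intro k h1 h2
    have hk0 : k ≠ 0 := by omega
    rw [hp, coeff_sub, finset_sum_coeff]
    rw [coeff_C, if_neg hk0, sub_zero]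
    rw [Finset.sum_eq_single k]
    · simp [coeff_C_mul, coeff_X_pow]
    · intro b _ hb
      simp [coeff_C_mul, coeff_X_pow, Ne.symm hb]
    · intro h
      exact absurd (Finset.mem_Icc.mpr ⟨h1, h2⟩) h
  have hpne : p ≠ 0 := by
    intro h
    rw [h] at hcoeff0
    simp at hcoeff0
    exact hw0 hcoeff0.symm.symm
  have hdeg : p.natDegree ≤ n := by
    apply le_trans (natDegree_sub_le _ _)
    apply max_le
    · apply natDegree_sum_le_of_forall_le
      intro k hk
      exact le_trans (natDegree_C_mul_le _ _)
        (by simpa using (Finset.mem_Icc.mp hk).2)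
    · simp
  -- roots
  have hsplit : Splits p := IsAlgClosed.splits p
  have hcard : Multiset.card p.roots = p.natDegree :=
    (splits_iff_card_roots).mp hsplit
  have hroots : ∀ r ∈ p.roots, 1 ≤ ‖r‖ := by
    intro r hr
    by_contra hlt
    push_neg at hlt
    have h0 : p.eval r = 0 := (mem_roots hpne).mp hr
    rw [heval] at h0
    exact hcon r hlt (sub_eq_zero.mp h0)
  -- norm of w via constant coefficient
  have hwabs : ‖w‖ =
      ‖p.leadingCoeff‖ * (p.roots.map (fun x => ‖x‖)).prod := by
    have h0 : p.coeff 0 = p.leadingCoeff * (-1) ^ (p.natDegree - 0) *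
        p.roots.esymm (p.natDegree - 0) :=
      coeff_eq_esymm_roots_of_card hcard (Nat.zero_le _)
    rw [hcoeff0, Nat.sub_zero] at h0
    have he : p.roots.esymm p.natDegree = p.roots.prod := by
      rw [← hcard]; exact esymm_card_self p.roots
    rw [he] at h0
    have h1 : ‖-w‖ =
        ‖p.leadingCoeff * (-1) ^ p.natDegree * p.roots.prod‖ := by rw [h0]
    simpa [norm_mul, norm_mprod, mul_assoc] using h1
  -- coefficient bounds
  have hkey : ∀ k ∈ Finset.Icc 1 n, ‖qh k‖ ≤ (n.choose k : ℝ) * ‖w‖ := by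
    intro k hk
    obtain ⟨hk1, hk2⟩ := Finset.mem_Icc.mp hk
    rcases le_or_gt k p.natDegree with hkm | hkm
    · have hc : p.coeff k = p.leadingCoeff * (-1) ^ (p.natDegree - k) *
          p.roots.esymm (p.natDegree - k) :=
        coeff_eq_esymm_roots_of_card hcard hkm
      rw [hcoeffk k hk1 hk2] at hc
      have hb : ‖p.roots.esymm (p.natDegree - k)‖ ≤
          (p.natDegree.choose (p.natDegree - k) : ℝ) * (p.roots.map (fun x => ‖x‖)).prod := by
        have := esymm_abs_le p.roots hroots (p.natDegree - k)
        rwa [hcard] at this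
      have hcs : p.natDegree.choose (p.natDegree - k) = p.natDegree.choose k :=
        Nat.choose_symm hkm
      calc ‖qh k‖
          = ‖p.leadingCoeff‖ *
              ‖p.roots.esymm (p.natDegree - k)‖ := by
            rw [hc]; simp [norm_mul]
        _ ≤ ‖p.leadingCoeff‖ *
              ((p.natDegree.choose (p.natDegree - k) : ℝ) * (p.roots.map (fun x => ‖x‖)).prod) :=
            mul_le_mul_of_nonneg_left hb (norm_nonneg _)
        _ = (p.natDegree.choose k : ℝ) *
              (‖p.leadingCoeff‖ * (p.roots.map (fun x => ‖x‖)).prod) := by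
            rw [hcs]; ring
        _ ≤ (n.choose k : ℝ) *
              (‖p.leadingCoeff‖ * (p.roots.map (fun x => ‖x‖)).prod) := by
            apply mul_le_mul_of_nonneg_right _ (by rw [← hwabs]; exact norm_nonneg w)
            exact_mod_cast Nat.choose_le_choose k hdeg
        _ = (n.choose k : ℝ) * ‖w‖ := by rw [hwabs]
    · have hc : p.coeff k = 0 := coeff_eq_zero_of_natDegree_lt hkm
      rw [hcoeffk k hk1 hk2] at hc
      rw [hc, norm_zero]
      positivity
  -- contradiction
  have hsup : (Finset.Icc 1 n).sup' (Finset.nonempty_Icc.mpr hn)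
      (fun k => ‖qh k‖ / (n.choose k)) ≤ ‖w‖ := by
    apply Finset.sup'_le
    intro k hk
    have hpos : (0 : ℝ) < (n.choose k : ℝ) := by
      exact_mod_cast Nat.choose_pos (Finset.mem_Icc.mp hk).2
    rw [div_le_iff₀ hpos, mul_comm]
    exact hkey k hk
  exact absurd hw (not_lt.mpr hsup)
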